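/- Let G be a discrete group, I a nonempty set, T = I × G × I, and S = B(I,G). Let Ψ : ℓ¹(T) → ℓ¹(S) be defined by Ψ(b)(t) := b(t) for t ∈ T and Ψ(b)(o) := −Σ_{s∈T} b(s), and let Θ : ℓ¹(S) → ℓ¹(T) be the restriction map Θ(a) := a|_T. Then Θ is a continuous algebra homomorphism and Θ ∘ Ψ = Id on ℓ¹(T). -/

import Mathlib

open Filter Topology
open scoped ENNReal TensorProduct Classical

noncomputable section

/-- The Banach space `ℓ¹(X)` of absolutely summable complex functions on `X`. -/
abbrev l1 (X : Type*) : Type _ := lp (fun _ : X => ℂ) 1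

section Defs

variable {I G : Type*} [Group G]

/-- The multiplication of the Brandt semigroup `S = B(I,G) = (I × G × I) ∪ {o}`,
where the zero element `o` is encoded as `none`. -/
def brandtMul : Option (I × G × I) → Option (I × G × I) → Option (I × G × I)
  | some (i, g, j), some (i', g', j') => if j = i' then some (i, g * g', j') else none
  | _, _ => none

/-- Spec: `mul` is the convolution product on `ℓ¹(T)`, `T = I × G × I`:
`(ab)(i,g,j) = Σ_{k ∈ I, h ∈ G} a(i, g h⁻¹, k) b(k, h, j)`. -/
def IsConvT (mul : l1 (I × G × I) → l1 (I × G × I) → l1 (I × G × I)) : Prop :=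
  ∀ (a b : l1 (I × G × I)) (i : I) (g : G) (j : I),
    mul a b (i, g, j) = ∑' p : I × G, a (i, g * p.2⁻¹, p.1) * b (p.1, p.2, j)

/-- Spec: `mul` is the convolution product on the group algebra `ℓ¹(G)`. -/
def IsConvG (mul : l1 G → l1 G → l1 G) : Prop :=
  ∀ (a b : l1 G) (g : G), mul a b g = ∑' h : G, a (g * h⁻¹) * b h

/-- Spec: `act` is the left module action of `ℓ¹(T)` on `ℓ¹(T × T) = ℓ¹(T) ⊗̂ ℓ¹(T)`,
determined by `a·(x ⊗ y) = (ax) ⊗ y`. -/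
def IsLeftActT
    (act : l1 (I × G × I) → l1 ((I × G × I) × (I × G × I)) → l1 ((I × G × I) × (I × G × I))) :
    Prop :=
  ∀ (a : l1 (I × G × I)) (w : l1 ((I × G × I) × (I × G × I))) (i : I) (g : G) (j : I)
    (t' : I × G × I),
    act a w ((i, g, j), t') = ∑' p : I × G, a (i, g * p.2⁻¹, p.1) * w ((p.1, p.2, j), t')

/-- Spec: `act` is the right module action of `ℓ¹(T)` on `ℓ¹(T × T) = ℓ¹(T) ⊗̂ ℓ¹(T)`,
determined by `(x ⊗ y)·a = x ⊗ (ya)`. -/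
def IsRightActT
    (act : l1 ((I × G × I) × (I × G × I)) → l1 (I × G × I) → l1 ((I × G × I) × (I × G × I))) :
    Prop :=
  ∀ (w : l1 ((I × G × I) × (I × G × I))) (a : l1 (I × G × I)) (t : I × G × I) (i : I) (g : G)
    (j : I),
    act w a (t, (i, g, j)) = ∑' p : I × G, w (t, (i, g * p.2⁻¹, p.1)) * a (p.1, p.2, j)

/-- Spec: `d` is the diagonal map `π : ℓ¹(T × T) = ℓ¹(T) ⊗̂ ℓ¹(T) → ℓ¹(T)`,
determined by `δ_x ⊗ δ_y ↦ δ_x δ_y`. -/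
def IsDiagT (d : l1 ((I × G × I) × (I × G × I)) → l1 (I × G × I)) : Prop :=
  ∀ (w : l1 ((I × G × I) × (I × G × I))) (i : I) (g : G) (j : I),
    d w (i, g, j) = ∑' p : I × G, w ((i, g * p.2⁻¹, p.1), (p.1, p.2, j))

/-- Spec: `act` is the left module action of `ℓ¹(G)` on `ℓ¹(G × G) = ℓ¹(G) ⊗̂ ℓ¹(G)`. -/
def IsLeftActG (act : l1 G → l1 (G × G) → l1 (G × G)) : Prop :=
  ∀ (a : l1 G) (w : l1 (G × G)) (g g' : G),
    act a w (g, g') = ∑' h : G, a (g * h⁻¹) * w (h, g')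

/-- Spec: `act` is the right module action of `ℓ¹(G)` on `ℓ¹(G × G) = ℓ¹(G) ⊗̂ ℓ¹(G)`. -/
def IsRightActG (act : l1 (G × G) → l1 G → l1 (G × G)) : Prop :=
  ∀ (w : l1 (G × G)) (a : l1 G) (g g' : G),
    act w a (g, g') = ∑' h : G, w (g, g' * h⁻¹) * a h

/-- Spec: `d` is the diagonal map `π : ℓ¹(G × G) = ℓ¹(G) ⊗̂ ℓ¹(G) → ℓ¹(G)`. -/
def IsDiagG (d : l1 (G × G) → l1 G) : Prop :=
  ∀ (w : l1 (G × G)) (g : G), d w g = ∑' h : G, w (g * h⁻¹, h)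

/-- Spec: `mul` is the convolution product on the semigroup algebra `ℓ¹(S)`, `S = B(I,G)`:
`(ab)(s) = Σ_{u v = s} a(u) b(v)`. -/
def IsConvS (mul : l1 (Option (I × G × I)) → l1 (Option (I × G × I)) →
    l1 (Option (I × G × I))) : Prop :=
  ∀ (a b : l1 (Option (I × G × I))) (s : Option (I × G × I)),
    mul a b s =
      ∑' p : {p : Option (I × G × I) × Option (I × G × I) // brandtMul p.1 p.2 = s},
        a p.val.1 * b p.val.2

/-- Spec: left module action of `ℓ¹(S)` on `ℓ¹(S × S) = ℓ¹(S) ⊗̂ ℓ¹(S)`. -/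
def IsLeftActS (act : l1 (Option (I × G × I)) →
    l1 (Option (I × G × I) × Option (I × G × I)) →
    l1 (Option (I × G × I) × Option (I × G × I))) : Prop :=
  ∀ (a : l1 (Option (I × G × I))) (w : l1 (Option (I × G × I) × Option (I × G × I)))
    (s s' : Option (I × G × I)),
    act a w (s, s') =
      ∑' p : {p : Option (I × G × I) × Option (I × G × I) // brandtMul p.1 p.2 = s},
        a p.val.1 * w (p.val.2, s')

/-- Spec: right module action of `ℓ¹(S)` on `ℓ¹(S × S) = ℓ¹(S) ⊗̂ ℓ¹(S)`. -/
def IsRightActS (act : l1 (Option (I × G × I) × Option (I × G × I)) →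
    l1 (Option (I × G × I)) →
    l1 (Option (I × G × I) × Option (I × G × I))) : Prop :=
  ∀ (w : l1 (Option (I × G × I) × Option (I × G × I))) (a : l1 (Option (I × G × I)))
    (s s' : Option (I × G × I)),
    act w a (s, s') =
      ∑' p : {p : Option (I × G × I) × Option (I × G × I) // brandtMul p.1 p.2 = s'},
        w (s, p.val.1) * a p.val.2

/-- Spec: the diagonal map `π : ℓ¹(S × S) = ℓ¹(S) ⊗̂ ℓ¹(S) → ℓ¹(S)`. -/
def IsDiagS (d : l1 (Option (I × G × I) × Option (I × G × I)) → l1 (Option (I × G × I))) :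
    Prop :=
  ∀ (w : l1 (Option (I × G × I) × Option (I × G × I))) (s : Option (I × G × I)),
    d w s =
      ∑' p : {p : Option (I × G × I) × Option (I × G × I) // brandtMul p.1 p.2 = s},
        w p.val

/-- Spec: `E` sends `b ∈ ℓ¹(G × G)` and `i,j,i',j' ∈ I` to the element
`E^b_{(i,j,i',j')} ∈ ℓ¹(T × T)`. -/
def IsE (E : l1 (G × G) → I → I → I → I → l1 ((I × G × I) × (I × G × I))) : Prop :=
  ∀ (b : l1 (G × G)) (i j i' j' : I),
    (∀ g g' : G, E b i j i' j' ((i, g, j), (i', g', j')) = b (g, g')) ∧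
    (∀ (u v u' v' : I) (g g' : G), (u, v, u', v') ≠ (i, j, i', j') →
      E b i j i' j' ((u, g, v), (u', g', v')) = 0)

/-- Spec: `H` sends `c ∈ ℓ¹(G)` and `i,j ∈ I` to the element `H^c_{(i,j)} ∈ ℓ¹(T)`. -/
def IsH (H : l1 G → I → I → l1 (I × G × I)) : Prop :=
  ∀ (c : l1 G) (i j : I),
    (∀ g : G, H c i j (i, g, j) = c g) ∧
    (∀ (u v : I) (g : G), (u, v) ≠ (i, j) → H c i j (u, g, v) = 0)

/-- Spec: `comp` sends `a ∈ ℓ¹(T)` and `u,v ∈ I` to `a_{(u,v)} ∈ ℓ¹(G)`,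
`a_{(u,v)}(g) = a(u,g,v)`. -/
def IsComp (comp : l1 (I × G × I) → I → I → l1 G) : Prop :=
  ∀ (a : l1 (I × G × I)) (u v : I) (g : G), comp a u v g = a (u, g, v)

/-- The net `W_{F,λ} = (1/#F) Σ_{i,j ∈ F} E^{m_λ}_{(i,j,j,i)}` in `ℓ¹(T × T)`. -/
def Wnet (E : l1 (G × G) → I → I → I → I → l1 ((I × G × I) × (I × G × I)))
    {Λ : Type*} (m : Λ → l1 (G × G)) (F : Finset I) (l : Λ) :
    l1 ((I × G × I) × (I × G × I)) :=
  (F.card : ℂ)⁻¹ • ∑ i ∈ F, ∑ j ∈ F, E (m l) i j j i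

/-- `(m_λ)` is a bounded approximate diagonal for `ℓ¹(G)` (with respect to the given
realizations of the product, the module actions on `ℓ¹(G) ⊗̂ ℓ¹(G) = ℓ¹(G × G)` and
the diagonal map). -/
def IsBddApproxDiagG {Λ : Type*} [Preorder Λ]
    (mulG : l1 G → l1 G → l1 G) (actLG : l1 G → l1 (G × G) → l1 (G × G))
    (actRG : l1 (G × G) → l1 G → l1 (G × G)) (piG : l1 (G × G) → l1 G)
    (m : Λ → l1 (G × G)) : Prop :=
  (∃ M : ℝ, ∀ l, ‖m l‖ ≤ M) ∧
  ∀ c : l1 G,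
    Tendsto (fun l => actLG c (m l) - actRG (m l) c) atTop (𝓝 0) ∧
    Tendsto (fun l => mulG (piG (m l)) c) atTop (𝓝 c)

end Defs

/-- Pseudo-amenability of an `ℓ¹`-type Banach algebra `A = ℓ¹(X)`, whose projective tensor
square `A ⊗̂ A` is realized concretely as `M = ℓ¹(X × X)`: there is a net (equivalently, a
nontrivial filtered family) `w` in `M` such that `a·w_n − w_n·a → 0` and `π(w_n)a → a` for
every `a ∈ A`. -/
def HasApproxDiag {A M : Type*} [NormedAddCommGroup A] [NormedAddCommGroup M]
    (mul : A → A → A) (actL : A → M → M) (actR : M → A → M) (diag : M → A) : Prop :=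
  ∃ (ι : Type*) (F : Filter ι), F.NeBot ∧ ∃ w : ι → M,
    ∀ a : A,
      Tendsto (fun n => actL a (w n) - actR (w n) a) F (𝓝 0) ∧
      Tendsto (fun n => mul (diag (w n)) a) F (𝓝 a)

/-- A discrete group `G` is amenable: there is a left-invariant mean on `ℓ∞(G)`,
i.e. a positive normalized left translation invariant linear functional. -/
def AmenableGroup (G : Type*) [Group G] : Prop :=
  ∃ m : lp (fun _ : G => ℝ) ∞ →ₗ[ℝ] ℝ,
    (∀ f : lp (fun _ : G => ℝ) ∞, (∀ x, 0 ≤ f x) → 0 ≤ m f) ∧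
    (∀ f : lp (fun _ : G => ℝ) ∞, (∀ x, f x = 1) → m f = 1) ∧
    (∀ (g : G) (f f' : lp (fun _ : G => ℝ) ∞), (∀ x, f' x = f (g * x)) → m f' = m f)

/-- The projective tensor seminorm on the algebraic tensor product `A ⊗[ℂ] A`:
the infimum of `Σ ‖x_k‖ ‖y_k‖` over all finite representations `Σ x_k ⊗ y_k`. -/
def projSeminorm (A : Type*) [NormedAddCommGroup A] [NormedSpace ℂ A] (x : A ⊗[ℂ] A) : ℝ :=
  sInf {r : ℝ | ∃ (n : ℕ) (f : Fin n → A × A),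
    x = ∑ k, (f k).1 ⊗ₜ[ℂ] (f k).2 ∧ r = ∑ k, ‖(f k).1‖ * ‖(f k).2‖}

/-- A Banach algebra `A` is pseudo-amenable: there is a net (equivalently, a nontrivial
filtered family) `(w_n)` in `A ⊗̂ A` with `a·w_n − w_n·a → 0` and `π(w_n)a → a` for every
`a ∈ A`, where `π` is the diagonal map and `A ⊗̂ A` carries the projective tensor seminorm. -/
def PseudoAmenable (A : Type*) [NonUnitalNormedRing A] [NormedSpace ℂ A]
    [SMulCommClass ℂ A A] [IsScalarTower ℂ A A] : Prop :=
  ∃ (ι : Type*) (F : Filter ι), F.NeBot ∧ ∃ w : ι → A ⊗[ℂ] A,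
    ∀ a : A,
      Tendsto (fun n => projSeminorm A
        (TensorProduct.map (LinearMap.mulLeft ℂ a) LinearMap.id (w n) -
          TensorProduct.map LinearMap.id (LinearMap.mulRight ℂ a) (w n))) F (𝓝 0) ∧
      Tendsto (fun n => LinearMap.mul' ℂ A (w n) * a) F (𝓝 a)


/-- Auxiliary: the fiber of `brandtMul` over `some (i,g,j)` is parametrized by `I × G`. -/
def brandtFibEquiv {I G : Type*} [Group G] (i : I) (g : G) (j : I) :
    (I × G) ≃ {p : Option (I × G × I) × Option (I × G × I) // brandtMul p.1 p.2 = some (i, g, j)} := by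
  refine Equiv.ofBijective
    (fun q => ⟨(some (i, g * q.2⁻¹, q.1), some (q.1, q.2, j)), by simp [brandtMul]⟩) ⟨?_, ?_⟩
  · rintro ⟨k, h⟩ ⟨k', h'⟩ he
    simp only [Subtype.mk.injEq, Prod.mk.injEq, Option.some.injEq] at he
    exact Prod.ext he.2.1 he.2.2.1
  · rintro ⟨⟨u, v⟩, hp⟩
    match u, v with
    | none, v => simp [brandtMul] at hp
    | some _, none => simp [brandtMul] at hp
    | some (a, b, c), some (a', b', c') =>
      simp only [brandtMul] at hp
      split_ifs at hp with hc
      · obtain ⟨ha, hb, hc'⟩ := by simpa using hp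
        refine ⟨(c, b'), ?_⟩
        subst ha hc hc'
        simp [Subtype.ext_iff, ← hb, mul_inv_cancel_right]

theorem brandt_l1_retraction {G : Type*} [Group G] {I : Type*} [Nonempty I]
    (mulS : l1 (Option (I × G × I)) → l1 (Option (I × G × I)) → l1 (Option (I × G × I)))
    (hmulS : IsConvS mulS)
    (mulT : l1 (I × G × I) → l1 (I × G × I) → l1 (I × G × I))
    (hmulT : IsConvT mulT)
    (Ψ : l1 (I × G × I) → l1 (Option (I × G × I)))
    (hΨ : ∀ (b : l1 (I × G × I)) (t : I × G × I), Ψ b (some t) = b t)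
    (hΨo : ∀ b : l1 (I × G × I), Ψ b none = -∑' t : I × G × I, b t)
    (Θ : l1 (Option (I × G × I)) → l1 (I × G × I))
    (hΘ : ∀ (a : l1 (Option (I × G × I))) (t : I × G × I), Θ a t = a (some t)) :
    Continuous Θ ∧ (∀ x y, Θ (x + y) = Θ x + Θ y) ∧ (∀ (c : ℂ) x, Θ (c • x) = c • Θ x) ∧
    (∀ x y, Θ (mulS x y) = mulT (Θ x) (Θ y)) ∧
    (∀ b : l1 (I × G × I), Θ (Ψ b) = b) := by
  have hadd : ∀ x y, Θ (x + y) = Θ x + Θ y := by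
    intro x y
    apply lp.ext
    funext t
    simp only [lp.coeFn_add, Pi.add_apply, hΘ]
  have hsmul : ∀ (c : ℂ) x, Θ (c • x) = c • Θ x := by
    intro c x
    apply lp.ext
    funext t
    simp only [lp.coeFn_smul, Pi.smul_apply, hΘ]
  have hbound : ∀ a, ‖Θ a‖ ≤ 1 * ‖a‖ := by
    intro a
    rw [one_mul, lp.norm_eq_tsum_rpow (by norm_num) (Θ a),
      lp.norm_eq_tsum_rpow (p := 1) (by norm_num) a]
    simp only [ENNReal.toReal_one, Real.rpow_one, ne_eq, one_ne_zero, not_false_iff, div_one]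
    have hsumm : Summable fun s : Option (I × G × I) => ‖a s‖ := by
      have := (lp.memℓp a).summable (p := 1) (by norm_num)
      simpa using this
    have : ∀ t : I × G × I, ‖Θ a t‖ = (fun s => ‖a s‖) (some t) := by
      intro t; rw [hΘ]
    calc ∑' t : I × G × I, ‖Θ a t‖ = ∑' t, (fun s => ‖a s‖) (some t) := by
          exact tsum_congr this
      _ ≤ ∑' s, ‖a s‖ := tsum_comp_le_tsum_of_inj hsumm (fun _ => norm_nonneg _)
          (Option.some_injective _)
  have hcont : Continuous Θ := by
    let L : l1 (Option (I × G × I)) →ₗ[ℂ] l1 (I × G × I) :=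
      { toFun := Θ, map_add' := hadd, map_smul' := hsmul }
    exact AddMonoidHomClass.continuous_of_bound L 1 hbound
  refine ⟨hcont, hadd, hsmul, ?_, ?_⟩
  · intro x y
    apply lp.ext
    funext t
    obtain ⟨i, g, j⟩ := t
    rw [hΘ, hmulS, hmulT]
    rw [← (brandtFibEquiv i g j).tsum_eq
      (fun p : {p : Option (I × G × I) × Option (I × G × I) // brandtMul p.1 p.2 = some (i, g, j)}
        => x p.val.1 * y p.val.2)]
    apply tsum_congr
    intro q
    simp [brandtFibEquiv, hΘ]
    rfl
  · intro b
    apply lp.ext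
    funext t
    rw [hΘ, hΨ]

end
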